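/- Let 0 < α ≤ 1/2, let q ≥ 2 and n ≥ q be integers, and let A be the largest positive integer with ⌈q/A⌉ − 1 ≥ α(q−1); assume A ≥ 2 (equivalently ⌈q/2⌉ − 1 ≥ α(q−1), which guarantees that every q-subset has an α-ball under every coloring). If A divides n, or A divides q, or (n mod A) < (q mod A), then the family of all q-element subsets of [n] with α-ball answers does not determine a (1/A)-ball: there exists an answer function a on all q-subsets, admitting at least one legal coloring, such that for every ball b∈[n] there is a coloring legal for a under which b is not a (1/A)-ball of [n]. -/

import Mathlib

/-- `b` is a `β`-ball of `A` under coloring `c`: at least `β * (|A| - 1)` balls of `A`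
other than `b` have color `c b`. -/
def betaBall {n : ℕ} (β : ℝ) (c : Fin n → Bool) (A : Finset (Fin n)) (b : Fin n) : Prop :=
  b ∈ A ∧ β * ((A.card : ℝ) - 1) ≤ (((A.erase b).filter fun x => c x = c b).card : ℝ)

/-- A coloring is legal for an answer function `a` on all `q`-element subsets in the
`α`-ball model: every answer is an `α`-ball of its query. -/
def LegalAlpha {n : ℕ} (α : ℝ) (q : ℕ) (a : Finset (Fin n) → Fin n) (c : Fin n → Bool) : Prop :=
  ∀ T : Finset (Fin n), T.card = q → betaBall α c T (a T)

section Aux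

variable {n : ℕ}

/-- the "hole": element 0, present only when `n % A = 1`. -/
def hole (n A : ℕ) : Finset (Fin n) :=
  Finset.univ.filter fun b => n % A = 1 ∧ b.val = 0

/-- membership in the `i`-th punctured residue class. -/
def pp (A i : ℕ) (b : Fin n) : Prop := b.val % A = i ∧ b ∉ hole n A

instance ppDec (A i : ℕ) : DecidablePred (pp (n := n) A i) := fun _ => instDecidableAnd

/-- number of elements of `T` in the `i`-th punctured class. -/
def score (A i : ℕ) (T : Finset (Fin n)) : ℕ := (T.filter (pp A i)).card

/-- the spec of a good answer for query `T`. -/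
def QQ (A : ℕ) (T : Finset (Fin n)) (b : Fin n) : Prop :=
  b ∈ T ∧ b ∉ hole n A ∧ ∀ i, score A i T ≤ score A (b.val % A) T

open Classical in
noncomputable def ans (A : ℕ) (d : Fin n) (T : Finset (Fin n)) : Fin n :=
  if h : ∃ b, QQ A T b then h.choose else d

lemma ans_spec {A : ℕ} {d : Fin n} {T : Finset (Fin n)} (h : ∃ b, QQ A T b) :
    QQ A T (ans A d T) := by
  rw [ans, dif_pos h]
  exact h.choose_spec

lemma hole_card_le (A : ℕ) : (hole n A).card ≤ 1 := by
  apply Finset.card_le_one.2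
  intro x hx y hy
  simp only [hole, Finset.mem_filter] at hx hy
  exact Fin.ext (hx.2.2.trans hy.2.2.symm)

lemma score_eq_zero (A i : ℕ) (hA : 0 < A) (hi : A ≤ i) (T : Finset (Fin n)) :
    score A i T = 0 := by
  rw [score, Finset.card_eq_zero, Finset.filter_eq_empty_iff]
  intro b _ hb
  obtain ⟨h1, -⟩ := hb
  have := Nat.mod_lt b.val hA
  omega

lemma score_sum (A : ℕ) (hA : 0 < A) (T : Finset (Fin n)) :
    ∑ i ∈ Finset.range A, score A i T = (T \ hole n A).card := by
  rw [Finset.card_eq_sum_card_fiberwise (f := fun b => b.val % A) (t := Finset.range A)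
    (fun b _ => Finset.mem_range.2 (Nat.mod_lt _ hA))]
  apply Finset.sum_congr rfl
  intro i _
  unfold score
  congr 1
  ext b
  simp only [Finset.mem_filter, Finset.mem_sdiff, pp]
  tauto

lemma exists_QQ (A : ℕ) (hA : 0 < A) (T : Finset (Fin n))
    (hT : 1 ≤ (T \ hole n A).card) : ∃ b, QQ A T b := by
  obtain ⟨i₀, hi₀mem, hmax⟩ := Finset.exists_max_image (Finset.range A)
    (fun i => score A i T) ⟨0, Finset.mem_range.2 hA⟩
  have hsum : ∑ i ∈ Finset.range A, score A i T ≤ A * score A i₀ T := by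
    calc ∑ i ∈ Finset.range A, score A i T
        ≤ (Finset.range A).card • score A i₀ T :=
          Finset.sum_le_card_nsmul _ _ _ (fun i hi => hmax i hi)
      _ = A * score A i₀ T := by simp [smul_eq_mul]
  rw [score_sum A hA T] at hsum
  have hpos : 0 < score A i₀ T := by
    rcases Nat.eq_zero_or_pos (score A i₀ T) with h | h
    · rw [h, Nat.mul_zero] at hsum; omega
    · exact h
  obtain ⟨b, hb⟩ := Finset.card_pos.1 hpos
  rw [Finset.mem_filter] at hb
  refine ⟨b, hb.1, hb.2.2, ?_⟩
  intro i
  rw [hb.2.1]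
  by_cases hiA : i < A
  · exact hmax i (Finset.mem_range.2 hiA)
  · rw [score_eq_zero A i hA (by omega)]
    exact Nat.zero_le _

lemma fiber_card_le (A i c : ℕ) (h : ∀ b : Fin n, b.val % A = i → b.val / A < c) :
    (Finset.univ.filter fun b : Fin n => b.val % A = i).card ≤ c := by
  classical
  have key : (Finset.univ.filter fun b : Fin n => b.val % A = i).card ≤
      (Finset.range c).card := by
    apply Finset.card_le_card_of_injOn (fun b : Fin n => b.val / A)
    · intro b hb
      rw [Finset.mem_coe, Finset.mem_filter] at hb
      exact Finset.mem_range.2 (h b hb.2)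
    · intro b1 hb1 b2 hb2 hd
      rw [Finset.mem_coe, Finset.mem_filter] at hb1 hb2
      obtain ⟨-, hb1⟩ := hb1
      obtain ⟨-, hb2⟩ := hb2
      simp only at hd
      have e1 := Nat.div_add_mod b1.val A
      have e2 := Nat.div_add_mod b2.val A
      rw [hd] at e1
      apply Fin.ext
      omega
  simpa using key

end Aux

theorem stmt_15 (α : ℝ) (hα0 : 0 < α) (hα : α ≤ 1 / 2) (q n A : ℕ)
    (hq : 2 ≤ q) (hn : q ≤ n)
    (hA : 1 ≤ A ∧ α * ((q : ℝ) - 1) ≤ (⌈(q : ℝ) / (A : ℝ)⌉ : ℝ) - 1)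
    (hAmax : ∀ A' : ℕ, 1 ≤ A' → α * ((q : ℝ) - 1) ≤ (⌈(q : ℝ) / (A' : ℝ)⌉ : ℝ) - 1 → A' ≤ A)
    (hA2 : 2 ≤ A)
    (hdiv : A ∣ n ∨ A ∣ q ∨ n % A < q % A) :
    ∃ a : Finset (Fin n) → Fin n,
      (∀ T : Finset (Fin n), T.card = q → a T ∈ T) ∧
      (∃ c : Fin n → Bool, LegalAlpha α q a c) ∧
      ∀ b : Fin n, ∃ c : Fin n → Bool, LegalAlpha α q a c ∧
        ¬ betaBall (1 / (A : ℝ)) c Finset.univ b := by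
  classical
  obtain ⟨hA1, hceil⟩ := hA
  have hA0 : 0 < A := by omega
  have hAR : (0:ℝ) < A := by exact_mod_cast hA0
  -- q > A
  have hAq : A < q := by
    by_contra h
    push_neg at h
    have h1 : (q:ℝ)/A ≤ 1 := (div_le_one hAR).2 (by exact_mod_cast h)
    have h2 : (⌈(q:ℝ)/A⌉ : ℝ) ≤ 1 := by
      have : ⌈(q:ℝ)/A⌉ ≤ (1:ℤ) := Int.ceil_le.2 (by simpa using h1)
      exact_mod_cast this
    have h3 : (0:ℝ) < α * ((q:ℝ) - 1) := by
      apply mul_pos hα0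
      have : (2:ℝ) ≤ q := by exact_mod_cast hq
      linarith
    linarith
  have hq3 : 3 ≤ q := by omega
  have hn0 : 0 < n := by omega
  set d : Fin n := ⟨0, hn0⟩ with hd
  -- existence of a good answer for every q-set
  have hEx : ∀ T : Finset (Fin n), T.card = q → ∃ b, QQ A T b := by
    intro T hT
    apply exists_QQ A hA0 T
    have h1 := Finset.le_card_sdiff (hole n A) T
    have h2 := hole_card_le (n := n) A
    omega
  have hQT : ∀ T : Finset (Fin n), T.card = q → QQ A T (ans A d T) :=
    fun T hT => ans_spec (hEx T hT)
  -- pigeonhole: A * max score ≥ q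
  have hm : ∀ T : Finset (Fin n), T.card = q →
      q ≤ A * score A ((ans A d T).val % A) T := by
    intro T hT
    have hQ := hQT T hT
    set m := score A ((ans A d T).val % A) T with hmdef
    have hsum : (T \ hole n A).card ≤ A * m := by
      rw [← score_sum A hA0 T]
      calc ∑ i ∈ Finset.range A, score A i T
          ≤ (Finset.range A).card • m :=
            Finset.sum_le_card_nsmul _ _ _ (fun i _ => hQ.2.2 i)
        _ = A * m := by simp [smul_eq_mul]
    have hsd := Finset.le_card_sdiff (hole n A) T
    have hXle := hole_card_le (n := n) A
    by_cases hr : n % A = 1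
    · have hq1 : q % A ≠ 1 := by
        rcases hdiv with h | h | h
        · have := Nat.mod_eq_zero_of_dvd h; omega
        · have := Nat.mod_eq_zero_of_dvd h; omega
        · omega
      rcases Nat.lt_or_ge (A * m) q with hlt | hge
      · exfalso
        have heq : q = 1 + A * m := by omega
        have h5 : q % A = 1 % A := by rw [heq, Nat.add_mul_mod_self_left]
        rw [Nat.mod_eq_of_lt (by omega : 1 < A)] at h5
        exact hq1 h5
      · exact hge
    · have hhole : hole n A = ∅ := by
        apply Finset.filter_false_of_mem
        intro b _ hb
        exact hr hb.1
      rw [hhole, Finset.sdiff_empty, hT] at hsum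
      exact hsum
  -- key real inequality from max score
  have hred : ∀ m : ℕ, q ≤ A * m → α * ((q:ℝ) - 1) ≤ (m:ℝ) - 1 := by
    intro m hqm
    have h1 : (⌈(q:ℝ)/A⌉ : ℝ) ≤ (m:ℝ) := by
      have h2 : ⌈(q:ℝ)/A⌉ ≤ (m:ℤ) := by
        apply Int.ceil_le.2
        rw [div_le_iff₀ hAR]
        push_cast
        calc (q:ℝ) ≤ (A:ℝ) * m := by exact_mod_cast hqm
          _ = (m:ℝ) * A := by ring
      exact_mod_cast h2
    linarith
  -- blue-case inequality
  have hblue : ∀ s : ℕ, 2 * s ≤ q → α * ((q:ℝ) - 1) ≤ (q:ℝ) - 1 - (s:ℝ) := by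
    intro s hs
    have h2 : (⌈(q:ℝ)/A⌉ : ℝ) ≤ (⌈(q:ℝ)/2⌉ : ℝ) := by
      have h2' : ⌈(q:ℝ)/A⌉ ≤ ⌈(q:ℝ)/2⌉ := by
        apply Int.ceil_le_ceil
        apply div_le_div_of_nonneg_left (by positivity) (by norm_num)
        exact_mod_cast hA2
      exact_mod_cast h2'
    have h3 : (⌈(q:ℝ)/2⌉ : ℝ) ≤ (q:ℝ) - (s:ℝ) := by
      have h3' : ⌈(q:ℝ)/2⌉ ≤ ((q:ℤ) - (s:ℤ)) := by
        apply Int.ceil_le.2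
        push_cast
        have : (2:ℝ) * s ≤ q := by exact_mod_cast hs
        linarith
      exact_mod_cast h3'
    linarith
  -- legality of the class colorings
  have hlegal : ∀ i : ℕ, LegalAlpha α q (ans A d) (fun b => decide (pp A i b)) := by
    intro i T hTq
    have hQ := hQT T hTq
    obtain ⟨haT, haX, hargmax⟩ := hQ
    refine ⟨haT, ?_⟩
    rw [hTq]
    set c : Fin n → Bool := fun b => decide (pp A i b) with hc
    set aT := ans A d T with haTdef
    by_cases hPa : pp A i aT
    · -- red case
      have hi : aT.val % A = i := hPa.1
      set m := score A (aT.val % A) T with hmdef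
      have hqm : q ≤ A * m := hm T hTq
      have hm1 : 1 ≤ m := by
        rcases Nat.eq_zero_or_pos m with h | h
        · rw [h, Nat.mul_zero] at hqm; omega
        · exact h
      have hsub : (T.filter (pp A i)).erase aT ⊆
          (T.erase aT).filter fun x => c x = c aT := by
        intro x hx
        rw [Finset.mem_erase, Finset.mem_filter] at hx
        rw [Finset.mem_filter, Finset.mem_erase]
        refine ⟨⟨hx.1, hx.2.1⟩, ?_⟩
        show decide (pp A i x) = decide (pp A i aT)
        rw [decide_eq_true hx.2.2, decide_eq_true hPa]
      have hcard : m - 1 ≤ ((T.erase aT).filter fun x => c x = c aT).card := by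
        have h1 := Finset.card_le_card hsub
        rwa [Finset.card_erase_of_mem (Finset.mem_filter.2 ⟨haT, hPa⟩), ← score,
          ← hi, ← hmdef] at h1
      calc α * ((q:ℝ) - 1) ≤ (m:ℝ) - 1 := hred m hqm
        _ = ((m - 1 : ℕ) : ℝ) := by rw [Nat.cast_sub hm1]; norm_num
        _ ≤ _ := by exact_mod_cast hcard
    · -- blue case
      have hcaT : c aT = false := decide_eq_false hPa
      set s := score A i T with hsdef
      have h2s : 2 * s ≤ q := by
        have hine : i ≠ aT.val % A := fun h => hPa ⟨h.symm, haX⟩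
        have hdisj : Disjoint (T.filter (pp A i)) (T.filter (pp A (aT.val % A))) := by
          rw [Finset.disjoint_left]
          intro x hx1 hx2
          rw [Finset.mem_filter] at hx1 hx2
          exact hine (hx1.2.1 ▸ hx2.2.1 ▸ rfl)
        have hunion : s + score A (aT.val % A) T ≤ q := by
          rw [hsdef]
          show (T.filter (pp A i)).card + (T.filter (pp A (aT.val % A))).card ≤ q
          rw [← Finset.card_union_of_disjoint hdisj]
          calc ((T.filter (pp A i)) ∪ (T.filter (pp A (aT.val % A)))).card
              ≤ T.card := Finset.card_le_card
                (Finset.union_subset (Finset.filter_subset _ _) (Finset.filter_subset _ _))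
            _ = q := hTq
        have hsm : s ≤ score A (aT.val % A) T := hargmax i
        omega
      have hfe : (T.erase aT).filter (pp A i) = T.filter (pp A i) := by
        rw [Finset.filter_erase, Finset.erase_eq_of_notMem]
        intro h
        exact hPa (Finset.mem_filter.1 h).2
      have hsplit := Finset.card_filter_add_card_filter_not
        (s := T.erase aT) (p := pp A i)
      rw [hfe, Finset.card_erase_of_mem haT, hTq] at hsplit
      have hsplit2 : s + ((T.erase aT).filter (fun a => ¬ pp A i a)).card = q - 1 := by
        rw [hsdef]; exact hsplit
      have hsub : (T.erase aT).filter (fun x => ¬ pp A i x) ⊆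
          (T.erase aT).filter fun x => c x = c aT := by
        intro x hx
        rw [Finset.mem_filter] at hx
        rw [Finset.mem_filter]
        refine ⟨hx.1, ?_⟩
        show decide (pp A i x) = decide (pp A i aT)
        rw [decide_eq_false hx.2, decide_eq_false hPa]
      have hcard : (q - 1) - s ≤ ((T.erase aT).filter fun x => c x = c aT).card := by
        have h1 := Finset.card_le_card hsub
        omega
      have hsq : s + 1 ≤ q := by omega
      calc α * ((q:ℝ) - 1) ≤ (q:ℝ) - 1 - (s:ℝ) := hblue s h2s
        _ = (((q - 1) - s : ℕ) : ℝ) := by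
            rw [Nat.cast_sub (by omega), Nat.cast_sub (by omega : 1 ≤ q)]
            norm_num
        _ ≤ _ := by exact_mod_cast hcard
  refine ⟨ans A d, fun T hT => (hQT T hT).1, ⟨_, hlegal 0⟩, ?_⟩
  intro b
  by_cases hbX : b ∈ hole n A
  · -- b is the hole: use the singleton coloring
    have hb0 : n % A = 1 ∧ b.val = 0 := by
      simpa [hole] using hbX
    refine ⟨fun x => decide (x.val = 0), ?_, ?_⟩
    · -- legality
      intro T hTq
      obtain ⟨haT, haX, _⟩ := hQT T hTq
      refine ⟨haT, ?_⟩
      rw [hTq]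
      set c : Fin n → Bool := fun x => decide (x.val = 0) with hc
      set aT := ans A d T with haTdef
      have haT0 : aT.val ≠ 0 := by
        intro h
        exact haX (by simp [hole, hb0.1, h])
      have hcaT : c aT = false := decide_eq_false haT0
      have hone : ((T.erase aT).filter (fun x : Fin n => x.val = 0)).card ≤ 1 := by
        apply Finset.card_le_one.2
        intro x hx y hy
        rw [Finset.mem_filter] at hx hy
        exact Fin.ext (hx.2.trans hy.2.symm)
      have hsplit := Finset.card_filter_add_card_filter_not
        (s := T.erase aT) (p := fun x : Fin n => x.val = 0)
      rw [Finset.card_erase_of_mem haT, hTq] at hsplit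
      have hsub : (T.erase aT).filter (fun x : Fin n => ¬ x.val = 0) ⊆
          (T.erase aT).filter fun x => c x = c aT := by
        intro x hx
        rw [Finset.mem_filter] at hx
        rw [Finset.mem_filter]
        refine ⟨hx.1, ?_⟩
        show decide (x.val = 0) = decide (aT.val = 0)
        rw [decide_eq_false hx.2, decide_eq_false haT0]
      have hcard : q - 2 ≤ ((T.erase aT).filter fun x => c x = c aT).card := by
        have h1 := Finset.card_le_card hsub
        omega
      have hqR : (3:ℝ) ≤ q := by exact_mod_cast hq3
      calc α * ((q:ℝ) - 1) ≤ (1/2) * ((q:ℝ) - 1) := by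
            apply mul_le_mul_of_nonneg_right hα
            linarith
        _ ≤ (q:ℝ) - 2 := by linarith
        _ = ((q - 2 : ℕ) : ℝ) := by rw [Nat.cast_sub (by omega)]; norm_num
        _ ≤ _ := by exact_mod_cast hcard
    · -- b is not a (1/A)-ball
      rintro ⟨-, hle⟩
      set c : Fin n → Bool := fun x => decide (x.val = 0) with hc
      have hcb : c b = true := decide_eq_true hb0.2
      have hempty : ((Finset.univ.erase b).filter fun x => c x = c b) = ∅ := by
        rw [Finset.filter_eq_empty_iff]
        intro x hx
        rw [Finset.mem_erase] at hx
        rw [hcb]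
        intro hcx
        have hx0 : x.val = 0 := by
          have := of_decide_eq_true hcx
          exact this
        exact hx.1 (Fin.ext (by omega))
      rw [hempty] at hle
      simp only [Finset.card_empty, Nat.cast_zero, Finset.card_univ, Fintype.card_fin] at hle
      have hnR : (3:ℝ) ≤ n := by exact_mod_cast (by omega : 3 ≤ n)
      have : (0:ℝ) < 1 / (A:ℝ) * ((n:ℝ) - 1) := by
        apply mul_pos (by positivity)
        linarith
      linarith
  · -- b is not the hole: use its punctured class coloring
    set i := b.val % A with hidef
    refine ⟨fun x => decide (pp A i x), hlegal i, ?_⟩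
    rintro ⟨-, hle⟩
    set c : Fin n → Bool := fun x => decide (pp A i x) with hc
    set F := Finset.univ.filter (pp (n := n) A i) with hF
    have hbF : b ∈ F := Finset.mem_filter.2 ⟨Finset.mem_univ b, rfl, hbX⟩
    have hcb : c b = true := decide_eq_true ⟨rfl, hbX⟩
    have hfil : ((Finset.univ.erase b).filter fun x => c x = c b) = F.erase b := by
      rw [hF, ← Finset.filter_erase]
      apply Finset.filter_congr
      intro x _
      rw [hcb]
      show decide (pp A i x) = true ↔ pp A i x
      exact ⟨of_decide_eq_true, decide_eq_true⟩
    set k := n / A with hk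
    have hnk : n = A * k + n % A := (Nat.div_add_mod n A).symm
    have hrA : n % A < A := Nat.mod_lt n hA0
    have hk1 : 1 ≤ k := by
      rcases Nat.eq_zero_or_pos k with h | h
      · rw [h, Nat.mul_zero] at hnk; omega
      · exact h
    -- the key cardinality bound
    have hfc : A * F.card ≤ n + A - 2 := by
      by_cases hr0 : n % A = 0
      · have hfib : F.card ≤ k := by
          calc F.card ≤ (Finset.univ.filter fun x : Fin n => x.val % A = i).card :=
              Finset.card_le_card
                (Finset.monotone_filter_right _ (fun x _ hx => hx.1))
            _ ≤ k := fiber_card_le A i k (fun x hx => by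
                apply Nat.div_lt_of_lt_mul
                have := x.isLt
                omega)
        have h1 : A * F.card ≤ A * k := Nat.mul_le_mul_left A hfib
        omega
      · by_cases hr1 : n % A = 1
        · have hfk : F.card ≤ k := by
            by_cases hi0 : i = 0
            · have hAk1 : A * (k + 1) = A * k + A := by ring
              have hfib : (Finset.univ.filter fun x : Fin n => x.val % A = i).card ≤ k + 1 :=
                fiber_card_le A i (k + 1) (fun x hx => by
                  apply Nat.div_lt_of_lt_mul
                  have := x.isLt
                  omega)
              have hdfib : d ∈ (Finset.univ.filter fun x : Fin n => x.val % A = i) := by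
                rw [Finset.mem_filter]
                exact ⟨Finset.mem_univ d, by simp [hd, hi0]⟩
              have hsub2 : F ⊆ (Finset.univ.filter fun x : Fin n => x.val % A = i).erase d := by
                intro x hx
                rw [hF, Finset.mem_filter] at hx
                rw [Finset.mem_erase, Finset.mem_filter]
                refine ⟨?_, Finset.mem_univ x, hx.2.1⟩
                intro h
                apply hx.2.2
                rw [h]
                simp [hole, hr1, hd]
              have h2 := Finset.card_le_card hsub2
              rw [Finset.card_erase_of_mem hdfib] at h2
              omega
            · calc F.card ≤ (Finset.univ.filter fun x : Fin n => x.val % A = i).card :=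
                  Finset.card_le_card
                    (Finset.monotone_filter_right _ (fun x _ hx => hx.1))
                _ ≤ k := fiber_card_le A i k (fun x hx => by
                    apply Nat.div_lt_of_lt_mul
                    have hxlt := x.isLt
                    rcases Nat.lt_or_ge x.val (A * k) with h | h
                    · exact h
                    · exfalso
                      have hxe : x.val = A * k := by omega
                      rw [hxe, Nat.mul_mod_right] at hx
                      exact hi0 hx.symm)
          have h1 : A * F.card ≤ A * k := Nat.mul_le_mul_left A hfk
          omega
        · -- n % A ≥ 2
          have hAk1 : A * (k + 1) = A * k + A := by ring
          have hfib : F.card ≤ k + 1 := by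
            calc F.card ≤ (Finset.univ.filter fun x : Fin n => x.val % A = i).card :=
                Finset.card_le_card
                  (Finset.monotone_filter_right _ (fun x _ hx => hx.1))
              _ ≤ k + 1 := fiber_card_le A i (k + 1) (fun x hx => by
                  apply Nat.div_lt_of_lt_mul
                  have := x.isLt
                  omega)
          have h1 : A * F.card ≤ A * (k + 1) := Nat.mul_le_mul_left A hfib
          omega
    -- derive the contradiction
    have hf1' : 1 ≤ F.card := Finset.card_pos.2 ⟨b, hbF⟩
    rw [hfil, Finset.card_erase_of_mem hbF, Finset.card_univ, Fintype.card_fin] at hle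
    have hcast1 : ((F.card - 1 : ℕ) : ℝ) = (F.card : ℝ) - 1 := by
      rw [Nat.cast_sub hf1']; norm_num
    rw [hcast1] at hle
    have hge : (n:ℝ) - 1 ≤ (A:ℝ) * ((F.card : ℝ) - 1) := by
      calc (n:ℝ) - 1 = (A:ℝ) * (1 / (A:ℝ) * ((n:ℝ) - 1)) := by field_simp
        _ ≤ (A:ℝ) * ((F.card : ℝ) - 1) := by
            apply mul_le_mul_of_nonneg_left hle hAR.le
    have hcast2 : (A:ℝ) * (F.card : ℝ) ≤ (n:ℝ) + (A:ℝ) - 2 := by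
      have h1 : ((A * F.card : ℕ) : ℝ) ≤ ((n + A - 2 : ℕ) : ℝ) := by exact_mod_cast hfc
      rw [Nat.cast_mul, Nat.cast_sub (by omega : 2 ≤ n + A)] at h1
      push_cast at h1
      linarith
    have hnR : (2:ℝ) ≤ n := by exact_mod_cast (by omega : 2 ≤ n)
    nlinarith [hge, hcast2, hAR]
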